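/- Let φ be a Leibniz 2-cocycle on the twisted Schrödinger-Virasoro algebra with φ(L_0, x) = φ(x, L_0) = 0 for x among all Y_n, M_n. Then φ(Y_m, M_n) = 0 and φ(M_m, Y_n) = 0 for all m, n ∈ ℤ. -/

import Mathlib

abbrev B : Type := ℤ ⊕ ℤ ⊕ ℤ
abbrev V : Type := B →₀ ℂ

noncomputable def Lg (n : ℤ) : V := Finsupp.single (Sum.inl n) 1
noncomputable def Yg (n : ℤ) : V := Finsupp.single (Sum.inr (Sum.inl n)) 1
noncomputable def Mg (n : ℤ) : V := Finsupp.single (Sum.inr (Sum.inr n)) 1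

/-- Bracket on basis elements of the twisted Schrödinger–Virasoro algebra. -/
noncomputable def brB : B → B → V
  | Sum.inl n, Sum.inl m => ((m : ℂ) - n) • Lg (n + m)
  | Sum.inl n, Sum.inr (Sum.inl m) => ((m : ℂ) - n / 2) • Yg (n + m)
  | Sum.inl n, Sum.inr (Sum.inr p) => (p : ℂ) • Mg (n + p)
  | Sum.inr (Sum.inl m), Sum.inl n => -(((m : ℂ) - n / 2) • Yg (n + m))
  | Sum.inr (Sum.inr p), Sum.inl n => -((p : ℂ) • Mg (n + p))
  | Sum.inr (Sum.inl m), Sum.inr (Sum.inl m') => ((m' : ℂ) - m) • Mg (m + m')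
  | _, _ => 0

/-- The bilinear extension of the bracket to the whole space. -/
noncomputable def bk : V →ₗ[ℂ] V →ₗ[ℂ] V :=
  Finsupp.lsum ℂ fun a => LinearMap.toSpanSingleton ℂ (V →ₗ[ℂ] V)
    (Finsupp.lsum ℂ fun b => LinearMap.toSpanSingleton ℂ V (brB a b))

/-- `φ` is a Leibniz 2-cocycle on the twisted Schrödinger–Virasoro algebra. -/
def IsLeibnizCocycle (φ : V →ₗ[ℂ] V →ₗ[ℂ] ℂ) : Prop :=
  ∀ x y z : V, φ x (bk y z) = φ (bk x y) z - φ (bk x z) y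

lemma bk_single (a b : B) : bk (Finsupp.single a 1) (Finsupp.single b 1) = brB a b := by
  simp [bk, Finsupp.lsum_single, LinearMap.toSpanSingleton_apply]

lemma keyY (φ : V →ₗ[ℂ] V →ₗ[ℂ] ℂ) (hco : IsLeibnizCocycle φ) (m k n : ℤ) :
    (n : ℂ) * φ (Yg m) (Mg (k + n)) = -(((m : ℂ) - k / 2) * φ (Yg (k + m)) (Mg n)) := by
  have h := hco (Yg m) (Lg k) (Mg n)
  rw [show Yg m = Finsupp.single (Sum.inr (Sum.inl m)) (1:ℂ) from rfl,
      show Lg k = Finsupp.single (Sum.inl k) (1:ℂ) from rfl,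
      show Mg n = Finsupp.single (Sum.inr (Sum.inr n)) (1:ℂ) from rfl,
      bk_single, bk_single, bk_single] at h
  simp only [brB] at h
  have eY : Finsupp.single (Sum.inr (Sum.inl m)) (1:ℂ) = Yg m := rfl
  have eM : Finsupp.single (Sum.inr (Sum.inr n)) (1:ℂ) = Mg n := rfl
  simpa [smul_eq_mul, map_smul, map_neg, map_zero, eY, eM] using h

lemma keyM (φ : V →ₗ[ℂ] V →ₗ[ℂ] ℂ) (hco : IsLeibnizCocycle φ) (m k n : ℤ) :
    ((m : ℂ) - k / 2) * φ (Mg n) (Yg (k + m)) = -((n : ℂ) * φ (Mg (k + n)) (Yg m)) := by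
  have h := hco (Mg n) (Lg k) (Yg m)
  rw [show Yg m = Finsupp.single (Sum.inr (Sum.inl m)) (1:ℂ) from rfl,
      show Lg k = Finsupp.single (Sum.inl k) (1:ℂ) from rfl,
      show Mg n = Finsupp.single (Sum.inr (Sum.inr n)) (1:ℂ) from rfl,
      bk_single, bk_single, bk_single] at h
  simp only [brB] at h
  have eY : Finsupp.single (Sum.inr (Sum.inl m)) (1:ℂ) = Yg m := rfl
  have eM : Finsupp.single (Sum.inr (Sum.inr n)) (1:ℂ) = Mg n := rfl
  simpa [smul_eq_mul, map_smul, map_neg, map_zero, eY, eM] using h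

example : True := trivial

lemma fzeroY (φ : V →ₗ[ℂ] V →ₗ[ℂ] ℂ) (hco : IsLeibnizCocycle φ) :
    ∀ m : ℤ, φ (Yg m) (Mg (-m)) = 0 := by
  have main : ∀ m : ℤ, m ≠ 0 → φ (Yg m) (Mg (-m)) = 0 := by
    intro m hm
    have h := keyY φ hco m (2 * m) (-3 * m)
    rw [show 2 * m + -3 * m = -m by ring] at h
    have h2 : ((m : ℂ) - (2 * m : ℤ) / 2) = 0 := by push_cast; ring
    rw [h2, zero_mul, neg_zero] at h
    have hm' : ((-3 * m : ℤ) : ℂ) ≠ 0 := by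
      push_cast; intro hc
      apply hm
      have : (m : ℂ) = 0 := by linear_combination (-1/3 : ℂ) * hc
      exact_mod_cast this
    exact (mul_eq_zero.mp h).resolve_left hm'
  intro m
  rcases eq_or_ne m 0 with rfl | hm
  · have h := keyY φ hco 0 (-1) 1
    rw [show (-1 : ℤ) + 1 = 0 by ring, show (-1 : ℤ) + 0 = -1 by ring] at h
    have hmm := main (-1) (by norm_num)
    norm_num at hmm h ⊢
    rw [hmm] at h
    simpa using h
  · exact main m hm

lemma YM (φ : V →ₗ[ℂ] V →ₗ[ℂ] ℂ) (hco : IsLeibnizCocycle φ) (m n : ℤ) :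
    φ (Yg m) (Mg n) = 0 := by
  rcases eq_or_ne (n : ℤ) (-m) with rfl | hn
  · exact fzeroY φ hco m
  · have h := keyY φ hco m 0 n
    rw [zero_add, zero_add] at h
    have h' : ((m : ℂ) + n) * φ (Yg m) (Mg n) = 0 := by
      push_cast at h ⊢; linear_combination h
    rcases mul_eq_zero.mp h' with h1 | h2
    · exfalso
      apply hn
      have : (n : ℂ) = ((-m : ℤ) : ℂ) := by push_cast; linear_combination h1
      exact_mod_cast this
    · exact h2

lemma gzeroM (φ : V →ₗ[ℂ] V →ₗ[ℂ] ℂ) (hco : IsLeibnizCocycle φ) :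
    ∀ n : ℤ, φ (Mg n) (Yg (-n)) = 0 := by
  have g0 : φ (Mg 0) (Yg 0) = 0 := by
    have h := keyM φ hco 1 (-1) 0
    rw [show (-1 : ℤ) + 1 = 0 by ring, show (-1 : ℤ) + 0 = -1 by ring] at h
    simp only [Int.cast_zero, zero_mul, neg_zero] at h
    rcases mul_eq_zero.mp h with h1 | h2
    · exfalso; push_cast at h1; norm_num at h1
    · exact h2
  intro n
  rcases eq_or_ne n 0 with rfl | hn
  · simpa using g0
  · have h := keyM φ hco 0 (-n) n
    rw [show (-n : ℤ) + 0 = -n by ring, show (-n : ℤ) + n = 0 by ring] at h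
    rw [g0, mul_zero, neg_zero] at h
    rcases mul_eq_zero.mp h with h1 | h2
    · exfalso
      apply hn
      have : (n : ℂ) = 0 := by push_cast at h1; linear_combination (2 : ℂ) * h1
      exact_mod_cast this
    · exact h2

lemma MY (φ : V →ₗ[ℂ] V →ₗ[ℂ] ℂ) (hco : IsLeibnizCocycle φ) (m n : ℤ) :
    φ (Mg m) (Yg n) = 0 := by
  rcases eq_or_ne (n : ℤ) (-m) with rfl | hn
  · exact gzeroM φ hco m
  · have h := keyM φ hco n 0 m
    rw [zero_add, zero_add] at h
    have h' : ((m : ℂ) + n) * φ (Mg m) (Yg n) = 0 := by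
      push_cast at h ⊢; linear_combination h
    rcases mul_eq_zero.mp h' with h1 | h2
    · exfalso
      apply hn
      have : (n : ℂ) = ((-m : ℤ) : ℂ) := by push_cast; linear_combination h1
      exact_mod_cast this
    · exact h2

theorem stmt9 (φ : V →ₗ[ℂ] V →ₗ[ℂ] ℂ) (hco : IsLeibnizCocycle φ)
    (hY1 : ∀ n : ℤ, φ (Lg 0) (Yg n) = 0) (hY2 : ∀ n : ℤ, φ (Yg n) (Lg 0) = 0)
    (hM1 : ∀ n : ℤ, φ (Lg 0) (Mg n) = 0) (hM2 : ∀ n : ℤ, φ (Mg n) (Lg 0) = 0) :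
    ∀ m n : ℤ, φ (Yg m) (Mg n) = 0 ∧ φ (Mg m) (Yg n) = 0 := by
  exact fun m n => ⟨YM φ hco m n, MY φ hco m n⟩
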